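/- (Dzyadyk, residual formula) For an inconsistent system Vu = a with V ∈ ℝ^{(r+1)×r} and each D_j ≠ 0, the solution û^j of the r×r system obtained by deleting row j satisfies ⟨v^j, û^j⟩ − a_j = ((−1)^{j+1}/D_j) · Σ_{ν=1}^{r+1} (−1)^ν a_ν D_ν. -/

import Mathlib

/-- Dzyadyk residual formula: for an inconsistent system `Vu = a`,
`⟨v^j, û^j⟩ − a_j = ((−1)^{j+1}/D_j) Σ_ν (−1)^ν a_ν D_ν` (1-based indices in the paper,
here translated to 0-based `Fin` indices). -/
theorem stmt_8 (r : ℕ) (V : Matrix (Fin (r + 1)) (Fin r) ℝ) (a : Fin (r + 1) → ℝ)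
    (hinc : ¬∃ u : Fin r → ℝ, V.mulVec u = a)
    (D : Fin (r + 1) → ℝ) (hD : ∀ j, D j = (V.submatrix (Fin.succAbove j) id).det)
    (hDne : ∀ j, D j ≠ 0)
    (uhat : Fin (r + 1) → Fin r → ℝ)
    (huhat : ∀ j, (V.submatrix (Fin.succAbove j) id).mulVec (uhat j) =
      fun k => a (Fin.succAbove j k)) :
    ∀ j, (∑ i, V j i * uhat j i) - a j =
      ((-1) ^ (j : ℕ) / D j) * ∑ ν : Fin (r + 1), (-1) ^ ((ν : ℕ) + 1) * a ν * D ν := by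
  intro j
  set ρ : ℝ := (∑ i, V j i * uhat j i) - a j with hρ
  set A : Matrix (Fin (r + 1)) (Fin (r + 1)) ℝ :=
    Matrix.of (fun i => Fin.snoc (V i) (a i)) with hA
  set x : Fin (r + 1) → ℝ := Fin.snoc (uhat j) (-1) with hxdef
  -- submatrices of A deleting a row and the last column are submatrices of V
  have hsub : ∀ ν : Fin (r + 1),
      (A.submatrix ν.succAbove (Fin.last r).succAbove).det
        = (V.submatrix ν.succAbove id).det := by
    intro ν
    congr 1
    ext i m
    simp [hA, Fin.succAbove_last]
  -- A.mulVec x = ρ • e_j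
  have hAx : A.mulVec x = ρ • (Pi.single j 1 : Fin (r + 1) → ℝ) := by
    funext k
    have hexp : A.mulVec x k = (∑ i, V k i * uhat j i) - a k := by
      simp only [Matrix.mulVec, dotProduct]
      rw [Fin.sum_univ_castSucc]
      simp [hA, hxdef, mul_comm]
      ring
    by_cases hk : k = j
    · subst hk; simp [hexp, hρ]
    · obtain ⟨k', rfl⟩ := Fin.exists_succAbove_eq hk
      have := congrFun (huhat j) k'
      simp only [Matrix.mulVec, dotProduct, Matrix.submatrix_apply, id] at this
      have hne : j.succAbove k' ≠ j := Fin.succAbove_ne j k'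
      rw [hexp, this]
      simp [Pi.single_eq_of_ne hne]
  -- cramer-type identity at the last coordinate
  have hadj : (A.adjugate * A).mulVec x = A.det • x := by
    rw [Matrix.adjugate_mul, Matrix.smul_mulVec, Matrix.one_mulVec]
  have hkey : ρ * ((-1 : ℝ) ^ ((j : ℕ) + r) * (V.submatrix j.succAbove id).det)
      = A.det * (-1) := by
    have h1 := congrFun hadj (Fin.last r)
    rw [← Matrix.mulVec_mulVec, hAx] at h1
    rw [Matrix.mulVec_smul, Matrix.mulVec_single] at h1
    have h3 : A.adjugate (Fin.last r) j
        = (-1 : ℝ) ^ ((j : ℕ) + (r : ℕ)) * (V.submatrix j.succAbove id).det := by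
      rw [Matrix.adjugate_fin_succ_eq_det_submatrix, hsub j]
      norm_num [Fin.val_last]
    simp only [Pi.smul_apply, smul_eq_mul, MulOpposite.op_one, one_smul, Matrix.col_apply, h3] at h1
    rw [hxdef] at h1
    simp only [Fin.snoc_last] at h1
    linarith [h1]
  -- expansion of det A along the last column
  have hdet : A.det = ∑ ν : Fin (r + 1), (-1 : ℝ) ^ ((ν : ℕ) + r) * a ν * D ν := by
    rw [Matrix.det_succ_column A (Fin.last r)]
    refine Finset.sum_congr rfl fun ν _ => ?_
    rw [hsub ν, ← hD ν]
    have h6 : A ν (Fin.last r) = a ν := by simp [hA]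
    rw [h6, Fin.val_last]
  -- final algebra
  have hsum : A.det = (-1 : ℝ) ^ (r + 1) *
      ∑ ν : Fin (r + 1), (-1 : ℝ) ^ ((ν : ℕ) + 1) * a ν * D ν := by
    rw [hdet, Finset.mul_sum]
    refine Finset.sum_congr rfl fun ν _ => ?_
    have : ((-1 : ℝ)) ^ ((ν : ℕ) + r) = (-1 : ℝ) ^ (r + 1) * (-1 : ℝ) ^ ((ν : ℕ) + 1) := by
      rw [← pow_add]
      have h4 : r + 1 + ((ν : ℕ) + 1) = (ν : ℕ) + r + 2 := by ring
      rw [h4]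
      simp [pow_add]
    rw [this]; ring
  have hDj := hDne j
  rw [hD j] at hDj
  have hpow : ((-1:ℝ)) ^ ((j:ℕ) + r) * ((-1:ℝ)) ^ (r + 1) = -(-1:ℝ) ^ (j:ℕ) := by
    rw [← pow_add]
    have h5 : (j:ℕ) + r + (r + 1) = 2 * r + ((j:ℕ) + 1) := by ring
    rw [h5, pow_add, pow_mul]
    norm_num [pow_succ]
  have hP : ((-1:ℝ)) ^ ((j:ℕ)) * ((-1:ℝ)) ^ ((j:ℕ)) = 1 := by
    rw [← pow_add, ← two_mul, pow_mul]; norm_num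
  have hQ : ((-1:ℝ)) ^ r * ((-1:ℝ)) ^ r = 1 := by
    rw [← pow_add, ← two_mul, pow_mul]; norm_num
  rw [hD j, div_mul_eq_mul_div, eq_div_iff hDj]
  set S := ∑ ν : Fin (r + 1), ((-1:ℝ)) ^ ((ν : ℕ) + 1) * a ν * D ν with hS
  set Dv := (V.submatrix j.succAbove id).det with hDv
  rw [hsum] at hkey
  linear_combination ((-1:ℝ)) ^ ((j:ℕ) + r) * hkey - ρ * Dv * hP
    - ρ * Dv * ((-1:ℝ)) ^ ((j:ℕ)) * ((-1:ℝ)) ^ ((j:ℕ)) * hQ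
    + ((-1:ℝ)) ^ ((j:ℕ)) * S * hQ
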